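/- arXiv:1305.6976 — 6 statements merged into one kernel-verified Lean document; each statement's English description precedes it below -/
import Mathlib

section
/- Suppose ε : [0,1] → ℝ is C¹ and strictly positive, u ∈ C² satisfies u(0) = u(1) = 0 and (ε u')' = εg on [0,1]. Then σ := u'' satisfies σ(x) = g(x) − (ε'(x)/ε(x)²)·( ∫₀ˣ g(t) ε(t) dt − (∫₀¹ (1/ε(s)) ∫₀ˢ g(t) ε(t) dt ds)/(∫₀¹ 1/ε(s) ds) ) for all x ∈ [0,1]. -/
/-- Resolvent formula: if `(ε u')' = ε g` on `[0,1]` with `u(0) = u(1) = 0`,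
then `σ = u''` satisfies `σ = (I - R₁) g` explicitly. -/
theorem resolvent_formula_sigma (ε u g : ℝ → ℝ)
    (hε : ContDiff ℝ 1 ε) (hεpos : ∀ x ∈ Set.Icc (0:ℝ) 1, 0 < ε x)
    (hu : ContDiff ℝ 2 u) (hu0 : u 0 = 0) (hu1 : u 1 = 0)
    (hode : ∀ x ∈ Set.Icc (0:ℝ) 1, deriv (fun y => ε y * deriv u y) x = ε x * g x) :
    ∀ x ∈ Set.Icc (0:ℝ) 1,
      deriv (deriv u) x =
        g x - (deriv ε x / (ε x) ^ 2) *
          ((∫ t in (0:ℝ)..x, g t * ε t) -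
            (∫ s in (0:ℝ)..1, (1 / ε s) * ∫ t in (0:ℝ)..s, g t * ε t) /
              (∫ s in (0:ℝ)..1, 1 / ε s)) := by
  have h2 : ContDiff ℝ ((1:WithTop ℕ∞)+1) u := by norm_num at hu ⊢; exact hu
  have hu' : ContDiff ℝ 1 (deriv u) := (contDiff_succ_iff_deriv.mp h2).2.2
  set F : ℝ → ℝ := fun y => ε y * deriv u y with hFdef
  have hF : ContDiff ℝ 1 F := hε.mul hu'
  have hFdiff : Differentiable ℝ F := hF.differentiable (by norm_num)
  have hF' : Continuous (deriv F) := hF.continuous_deriv le_rfl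
  have hεd : Differentiable ℝ ε := hε.differentiable (by norm_num)
  have hud : Differentiable ℝ u := hu.differentiable (by norm_num)
  have hu'd : Differentiable ℝ (deriv u) := hu'.differentiable (by norm_num)
  have huIcc : Set.uIcc (0:ℝ) 1 = Set.Icc 0 1 := Set.uIcc_of_le (by norm_num)
  -- primitive identity
  have hG : ∀ x ∈ Set.Icc (0:ℝ) 1, (∫ t in (0:ℝ)..x, g t * ε t) = F x - F 0 := by
    intro x hx
    have hsub : Set.uIcc (0:ℝ) x ⊆ Set.Icc 0 1 := by
      rw [Set.uIcc_of_le hx.1]; exact Set.Icc_subset_Icc le_rfl hx.2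
    have h1 : (∫ t in (0:ℝ)..x, g t * ε t) = ∫ t in (0:ℝ)..x, deriv F t := by
      apply intervalIntegral.integral_congr
      intro t ht
      rw [hode t (hsub ht)]; ring
    rw [h1]
    exact intervalIntegral.integral_deriv_eq_sub (fun t _ => hFdiff t)
      (hF'.intervalIntegrable _ _)
  -- ∫ u' = 0
  have hint0 : (∫ s in (0:ℝ)..1, deriv u s) = 0 := by
    rw [intervalIntegral.integral_deriv_eq_sub (fun t _ => hud t)
      (hu'.continuous.intervalIntegrable _ _), hu1, hu0, sub_zero]
  set I1 : ℝ := ∫ s in (0:ℝ)..1, 1 / ε s with hI1def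
  set I2 : ℝ := ∫ s in (0:ℝ)..1, (1 / ε s) * (F s - F 0) with hI2def
  have hcont1 : ContinuousOn (fun s => 1 / ε s) (Set.Icc (0:ℝ) 1) :=
    continuousOn_const.div hε.continuous.continuousOn (fun s hs => (hεpos s hs).ne')
  have hi1 : IntervalIntegrable (fun s => 1 / ε s) MeasureTheory.volume 0 1 := by
    apply ContinuousOn.intervalIntegrable; rwa [huIcc]
  have hi2 : IntervalIntegrable (fun s => (1 / ε s) * (F s - F 0))
      MeasureTheory.volume 0 1 := by
    apply ContinuousOn.intervalIntegrable
    rw [huIcc]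
    exact hcont1.mul ((hF.continuous.continuousOn).sub continuousOn_const)
  have hI1pos : 0 < I1 := by
    apply intervalIntegral.intervalIntegral_pos_of_pos_on hi1 _ (by norm_num)
    intro s hs
    have : 0 < ε s := hεpos s ⟨le_of_lt hs.1, le_of_lt hs.2⟩
    positivity
  have hsplit : (0:ℝ) = F 0 * I1 + I2 := by
    have h1 : (∫ s in (0:ℝ)..1, deriv u s)
        = ∫ s in (0:ℝ)..1, (F 0 * (1 / ε s) + (1 / ε s) * (F s - F 0)) := by
      apply intervalIntegral.integral_congr
      intro s hs
      rw [huIcc] at hs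
      have hε0 : ε s ≠ 0 := (hεpos s hs).ne'
      show deriv u s = F 0 * (1 / ε s) + 1 / ε s * (F s - F 0)
      rw [show F s = ε s * deriv u s from rfl]
      field_simp
      ring
    have h2' := hint0
    rw [h1, intervalIntegral.integral_add ((hi1.const_mul (F 0))) hi2,
      intervalIntegral.integral_const_mul] at h2'
    linarith
  have hI1ne : I1 ≠ 0 := ne_of_gt hI1pos
  have h5 : I2 / I1 = -F 0 := by
    field_simp
    linarith
  intro x hx
  have hεx : ε x ≠ 0 := (hεpos x hx).ne'
  have hprod : deriv F x = deriv ε x * deriv u x + ε x * deriv (deriv u) x := by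
    simp only [hFdef]
    exact deriv_mul (hεd x) (hu'd x)
  have heq1 : ε x * g x = deriv ε x * deriv u x + ε x * deriv (deriv u) x := by
    rw [← hprod, hode x hx]
  have hux : deriv u x = F x / ε x := by
    rw [show F x = ε x * deriv u x from rfl]
    field_simp
  -- rewrite the integrals in the goal
  have hinner : (∫ s in (0:ℝ)..1, (1 / ε s) * ∫ t in (0:ℝ)..s, g t * ε t) = I2 := by
    apply intervalIntegral.integral_congr
    intro s hs
    rw [huIcc] at hs
    show 1 / ε s * ∫ t in (0:ℝ)..s, g t * ε t = 1 / ε s * (F s - F 0)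
    rw [hG s hs]
  rw [hinner, hG x hx, h5]
  rw [hux] at heq1
  field_simp at heq1 ⊢
  ring_nf
  ring_nf at heq1
  linarith
end

section
/- With A₁ = I + K₁ as above, the operator norm of A₁ on C([0,1]) with the sup norm satisfies ‖A₁‖_∞ ≥ (1/4)·‖ε'/ε‖_∞ − 1. -/
open MeasureTheory intervalIntegral

lemma key_integral (x δ : ℝ) (hx0 : 0 ≤ x) (hx1 : x ≤ 1) (hδ : 0 < δ) :
    (1:ℝ)/4 - 4*δ ≤ ∫ t in (0:ℝ)..1,
      (if x < t then t - 1 else t) * (min 1 (max (-1) ((x - t)/δ))) := by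
  set σ : ℝ → ℝ := fun t => min 1 (max (-1) ((x - t)/δ)) with hσdef
  set g : ℝ → ℝ := fun t => (if x < t then t - 1 else t) * σ t with hgdef
  set a := max 0 (x - δ) with ha
  set b := min 1 (x + δ) with hb
  have ha0 : 0 ≤ a := le_max_left _ _
  have hax : a ≤ x := max_le hx0 (by linarith)
  have hxb : x ≤ b := le_min hx1 (by linarith)
  have hb1 : b ≤ 1 := min_le_left _ _
  have hab : a ≤ b := hax.trans hxb
  have haxδ : x - δ ≤ a := le_max_right _ _
  have hbxδ : b ≤ x + δ := min_le_right _ _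
  have hσle : ∀ t, |σ t| ≤ 1 := fun t =>
    abs_le.mpr ⟨le_min (by norm_num) (le_max_left _ _), min_le_left _ _⟩
  have hσc : Continuous σ :=
    continuous_const.min (continuous_const.max ((continuous_const.sub continuous_id).div_const δ))
  have hgm : Measurable g := by
    apply Measurable.mul _ hσc.measurable
    exact Measurable.ite measurableSet_Ioi (measurable_id.sub measurable_const) measurable_id
  have hgb : ∀ t, 0 ≤ t → t ≤ 1 → |g t| ≤ 1 := by
    intro t h0 h1
    have h2 : |if x < t then t - 1 else t| ≤ 1 := by
      split_ifs <;> rw [abs_le] <;> constructor <;> linarith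
    calc |g t| = |if x < t then t - 1 else t| * |σ t| := abs_mul _ _
      _ ≤ 1 := mul_le_one₀ h2 (abs_nonneg _) (hσle t)
  have hInt : IntervalIntegrable g volume 0 1 := by
    rw [intervalIntegrable_iff_integrableOn_Ioc_of_le (by norm_num)]
    apply Measure.integrableOn_of_bounded (measure_Ioc_lt_top.ne) hgm.aestronglyMeasurable
    filter_upwards [ae_restrict_mem measurableSet_Ioc] with t ht
    simpa using hgb t ht.1.le ht.2
  have hI1 : IntervalIntegrable g volume 0 a := hInt.mono_set (by
    rw [Set.uIcc_of_le ha0, Set.uIcc_of_le zero_le_one]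
    exact Set.Icc_subset_Icc le_rfl (hab.trans hb1))
  have hI2 : IntervalIntegrable g volume a b := hInt.mono_set (by
    rw [Set.uIcc_of_le hab, Set.uIcc_of_le zero_le_one]
    exact Set.Icc_subset_Icc ha0 hb1)
  have hI3 : IntervalIntegrable g volume b 1 := hInt.mono_set (by
    rw [Set.uIcc_of_le hb1, Set.uIcc_of_le zero_le_one]
    exact Set.Icc_subset_Icc (ha0.trans hab) le_rfl)
  have hIa1 : IntervalIntegrable g volume a 1 := hInt.mono_set (by
    rw [Set.uIcc_of_le (hab.trans hb1), Set.uIcc_of_le zero_le_one]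
    exact Set.Icc_subset_Icc ha0 le_rfl)
  have hsplit : ∫ t in (0:ℝ)..1, g t
      = (∫ t in (0:ℝ)..a, g t) + (∫ t in a..b, g t) + ∫ t in b..1, g t := by
    rw [add_assoc, integral_add_adjacent_intervals hI2 hI3]
    exact (integral_add_adjacent_intervals hI1 hIa1).symm
  have hP1 : ∫ t in (0:ℝ)..a, g t = a^2/2 := by
    have heq : Set.EqOn g (fun t => t) (Set.uIcc 0 a) := by
      intro t ht
      rw [Set.uIcc_of_le ha0] at ht
      obtain ⟨h0, hta⟩ := ht
      have hnx : ¬ x < t := not_lt.mpr (hta.trans hax)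
      rcases eq_or_lt_of_le h0 with rfl | h0'
      · simp [hgdef, hnx]
      · have haeq : a = x - δ := by
          rcases le_total (x - δ) 0 with h | h
          · exfalso; have : a = 0 := max_eq_left h; linarith
          · exact max_eq_right h
        have hσ1 : σ t = 1 := by
          have hr : (1:ℝ) ≤ (x - t)/δ := (one_le_div hδ).mpr (by linarith)
          simp [hσdef, max_eq_right (by linarith : (-1:ℝ) ≤ (x-t)/δ), min_eq_left hr]
      
        simp [hgdef, hnx, hσ1]
    rw [integral_congr heq, integral_id]
    ring
  have hP3 : ∫ t in b..1, g t = (1-b)^2/2 := by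
    have heq : Set.EqOn g (fun t => 1 - t) (Set.uIcc b 1) := by
      intro t ht
      rw [Set.uIcc_of_le hb1] at ht
      obtain ⟨hbt, ht1⟩ := ht
      rcases eq_or_lt_of_le ht1 with rfl | ht1'
      · by_cases hx' : x < 1
        · simp [hgdef, hx']
        · have hx1' : x = 1 := le_antisymm hx1 (not_lt.mp hx')
          have hσ0 : σ 1 = 0 := by norm_num [hσdef, hx1']
          simp [hgdef, hσ0]
      · have hbeq : b = x + δ := by
          rcases le_total 1 (x + δ) with h | h
          · exfalso; have : b = 1 := min_eq_left h; linarith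
          · exact min_eq_right h
        have hxt : x < t := by
          have : x + δ ≤ t := hbeq ▸ hbt
          linarith
        have hσm : σ t = -1 := by
          have h1 : (x - t)/δ ≤ -1 := by rw [div_le_iff₀ hδ]; linarith [hbeq ▸ hbt]
          have h2 : max (-1) ((x-t)/δ) = -1 := max_eq_left h1
          simp [hσdef, h2]
        simp only [hgdef, if_pos hxt, hσm]
        ring
    rw [integral_congr heq,
      integral_sub intervalIntegrable_const intervalIntegral.intervalIntegrable_id,
      intervalIntegral.integral_const, integral_id, smul_eq_mul]
    ring
  have hP2 : -(b-a) ≤ ∫ t in a..b, g t := by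
    have hnorm : ‖∫ t in a..b, g t‖ ≤ 1 * |b - a| := by
      apply intervalIntegral.norm_integral_le_of_norm_le_const
      intro t ht
      rw [Set.uIoc_of_le hab] at ht
      simpa using hgb t (ha0.trans ht.1.le) (ht.2.trans hb1)
    rw [Real.norm_eq_abs, one_mul, abs_of_nonneg (by linarith : (0:ℝ) ≤ b - a)] at hnorm
    exact (abs_le.mp hnorm).1
  have h1 : x^2 - 2*δ ≤ a^2 := by
    rcases le_total (x - δ) 0 with h | h
    · have : a = 0 := max_eq_left h
      nlinarith
    · have : a = x - δ := max_eq_right h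
      nlinarith
  have h2 : (1-x)^2 - 2*δ ≤ (1-b)^2 := by
    rcases le_total 1 (x + δ) with h | h
    · have : b = 1 := min_eq_left h
      nlinarith
    · have : b = x + δ := min_eq_right h
      nlinarith
  rw [hsplit, hP1, hP3]
  nlinarith [sq_nonneg (2*x - 1), hP2]


/-- Sup-norm lower bound for `A₁ = I + K₁`:
`‖A₁‖_∞ ≥ (1/4)‖ε'/ε‖_∞ - 1`, i.e. for every `η > 0` there is a continuous `σ`
with `‖σ‖_∞ ≤ 1` such that `‖A₁σ‖_∞ ≥ (1/4)‖ε'/ε‖_∞ - 1 - η`. -/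
theorem A1_sup_norm_lower_bound (ε : ℝ → ℝ)
    (hε : ContDiff ℝ 1 ε) (hεpos : ∀ x ∈ Set.Icc (0:ℝ) 1, 0 < ε x)
    (Gx : ℝ → ℝ → ℝ)
    (hGx : ∀ x t : ℝ, Gx x t = if x < t then t - 1 else t) :
    ∀ η > (0:ℝ), ∃ σ : ℝ → ℝ, Continuous σ ∧ (∀ y ∈ Set.Icc (0:ℝ) 1, |σ y| ≤ 1) ∧
      ∃ x ∈ Set.Icc (0:ℝ) 1,
        (1 / 4) * (⨆ y : Set.Icc (0:ℝ) 1, |deriv ε y / ε y|) - 1 - η ≤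
          |σ x + (deriv ε x / ε x) * ∫ t in (0:ℝ)..1, Gx x t * σ t| := by
  intro η hη
  have hfc : ContinuousOn (fun y => |deriv ε y / ε y|) (Set.Icc (0:ℝ) 1) :=
    (((hε.continuous_deriv le_rfl).continuousOn.div hε.continuous.continuousOn
      (fun y hy => (hεpos y hy).ne')).abs)
  obtain ⟨x₀, hx₀, hmax⟩ := isCompact_Icc.exists_isMaxOn ⟨0, by norm_num⟩ hfc
  have hbdd : BddAbove (Set.range fun y : Set.Icc (0:ℝ) 1 => |deriv ε y / ε y|) := by
    refine ⟨|deriv ε x₀ / ε x₀|, ?_⟩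
    rintro _ ⟨y, rfl⟩
    exact hmax y.2
  have hM : (⨆ y : Set.Icc (0:ℝ) 1, |deriv ε (y:ℝ) / ε y|) = |deriv ε x₀ / ε x₀| := by
    apply le_antisymm
    · exact ciSup_le fun y => hmax y.2
    · exact le_ciSup hbdd (⟨x₀, hx₀⟩ : Set.Icc (0:ℝ) 1)
  set M := |deriv ε x₀ / ε x₀| with hMdef
  rw [hM]
  by_cases hcase : M ≤ 4*(1+η)
  · refine ⟨fun _ => 0, continuous_const, fun y _ => by simp, 0, by norm_num, ?_⟩
    simp only [mul_zero, intervalIntegral.integral_zero, zero_add, abs_zero, mul_zero]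
    linarith
  · push_neg at hcase
    set c := deriv ε x₀ / ε x₀ with hc
    have hMpos : (0:ℝ) < M := by nlinarith
    set δ := (1+η)/(4*M) with hδdef
    have hδ : 0 < δ := by positivity
    set s : ℝ := if 0 ≤ c then 1 else -1 with hs
    set σ₀ : ℝ → ℝ := fun t => min 1 (max (-1) ((x₀ - t)/δ)) with hσ₀
    have hσ₀c : Continuous σ₀ :=
      continuous_const.min (continuous_const.max
        ((continuous_const.sub continuous_id).div_const δ))
    have hσ₀le : ∀ t, |σ₀ t| ≤ 1 := fun t =>
      abs_le.mpr ⟨le_min (by norm_num) (le_max_left _ _), min_le_left _ _⟩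
    have hsabs : |s| = 1 := by rw [hs]; split_ifs <;> simp
    refine ⟨fun t => s * σ₀ t, continuous_const.mul hσ₀c, fun y _ => ?_, x₀, hx₀, ?_⟩
    · rw [abs_mul, hsabs, one_mul]; exact hσ₀le y
    · have hσ₀x : σ₀ x₀ = 0 := by norm_num [hσ₀]
      have hrw : (∫ t in (0:ℝ)..1, Gx x₀ t * (s * σ₀ t))
          = s * ∫ t in (0:ℝ)..1, (if x₀ < t then t - 1 else t) * σ₀ t := by
        simp only [hGx]
        rw [← intervalIntegral.integral_const_mul]
        congr 1; funext t; ring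
      rw [hrw]; simp only [hσ₀x, mul_zero, zero_add]
      have hcs : c * s = M := by
        rw [hs]; split_ifs with h
        · rw [mul_one, hMdef, abs_of_nonneg h]
        · rw [hMdef, abs_of_neg (not_le.mp h)]; ring
      have hkey := key_integral x₀ δ hx₀.1 hx₀.2 hδ
      have h4 : 4*δ*M = 1+η := by
        rw [hδdef]; field_simp
      have hIpos : (0:ℝ) ≤ 1/4 - 4*δ := by nlinarith [h4, hδ, hMpos, hcase]
      have heq : M * (1/4 - 4*δ) = 1/4*M - 1 - η := by nlinarith [h4]
      calc 1/4*M - 1 - η = M * (1/4 - 4*δ) := heq.symm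
        _ ≤ M * ∫ t in (0:ℝ)..1, (if x₀ < t then t - 1 else t) * σ₀ t :=
            mul_le_mul_of_nonneg_left hkey hMpos.le
        _ = c * (s * ∫ t in (0:ℝ)..1, (if x₀ < t then t - 1 else t) * σ₀ t) := by
            rw [← mul_assoc, hcs]
        _ ≤ |c * (s * ∫ t in (0:ℝ)..1, (if x₀ < t then t - 1 else t) * σ₀ t)| :=
            le_abs_self _
end

section
/- Let ε : [0,1] → ℝ be C¹ with 0 < m ≤ ε(x) ≤ M for all x. Then the inverse operator A₁⁻¹ = I − R₁, with R₁g(x) = (ε'(x)/ε(x)²)( ∫₀ˣ g(t)ε(t)dt − (∫₀¹ (1/ε(s)) ∫₀ˢ g(t)ε(t) dt ds)/(∫₀¹ 1/ε(s) ds) ), satisfies ‖A₁⁻¹‖_∞ ≤ 1 + ‖ε'/ε‖_∞ · (1/m)(1 + M/m)·‖ε‖₁ on C([0,1]) with the sup norm. -/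
open Set intervalIntegral

/-- Sup-norm bound for the inverse operator `A₁⁻¹ = I - R₁`:
`‖A₁⁻¹‖_∞ ≤ 1 + ‖ε'/ε‖_∞ (1/m)(1 + M/m) ‖ε‖₁`. -/

theorem A1_inverse_sup_norm_bound (ε : ℝ → ℝ) (m M : ℝ)
    (hε : ContDiff ℝ 1 ε) (hm : 0 < m)
    (hbounds : ∀ x ∈ Set.Icc (0:ℝ) 1, m ≤ ε x ∧ ε x ≤ M) :
    ∀ g : ℝ → ℝ, Continuous g →
      ∀ x ∈ Set.Icc (0:ℝ) 1,
        |g x - (deriv ε x / (ε x) ^ 2) *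
            ((∫ t in (0:ℝ)..x, g t * ε t) -
              (∫ s in (0:ℝ)..1, (1 / ε s) * ∫ t in (0:ℝ)..s, g t * ε t) /
                (∫ s in (0:ℝ)..1, 1 / ε s))| ≤
          (1 + (⨆ y : Set.Icc (0:ℝ) 1, |deriv ε y / ε y|) * (1 / m) * (1 + M / m) *
              ∫ t in (0:ℝ)..1, ε t) *
            ⨆ y : Set.Icc (0:ℝ) 1, |g y| := by
  intro g hg x hx
  have hεc : Continuous ε := hε.continuous
  have hε' : Continuous (deriv ε) := hε.continuous_deriv le_rfl
  have hεpos : ∀ y ∈ Icc (0:ℝ) 1, 0 < ε y := fun y hy => hm.trans_le (hbounds y hy).1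
  have hεne : ∀ y ∈ Icc (0:ℝ) 1, ε y ≠ 0 := fun y hy => (hεpos y hy).ne'
  have h01 : (0:ℝ) ∈ Icc (0:ℝ) 1 := ⟨le_rfl, zero_le_one⟩
  have hM : 0 < M := hm.trans_le ((hbounds 0 h01).1.trans (hbounds 0 h01).2)
  set K := ⨆ y : Icc (0:ℝ) 1, |deriv ε y / ε y| with hKdef
  set G := ⨆ y : Icc (0:ℝ) 1, |g y| with hGdef
  set E := ∫ t in (0:ℝ)..1, ε t with hEdef
  -- boundedness / sup facts
  have bddK : BddAbove (Set.range fun y : Icc (0:ℝ) 1 => |deriv ε y / ε y|) := by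
    have hcont : ContinuousOn (fun y => |deriv ε y / ε y|) (Icc (0:ℝ) 1) :=
      (hε'.continuousOn.div hεc.continuousOn hεne).abs
    have := (isCompact_Icc.image_of_continuousOn hcont).bddAbove
    rwa [Set.image_eq_range] at this
  have bddG : BddAbove (Set.range fun y : Icc (0:ℝ) 1 => |g y|) := by
    have hcont : ContinuousOn (fun y => |g y|) (Icc (0:ℝ) 1) := hg.continuousOn.abs
    have := (isCompact_Icc.image_of_continuousOn hcont).bddAbove
    rwa [Set.image_eq_range] at this
  have hKle : ∀ y ∈ Icc (0:ℝ) 1, |deriv ε y / ε y| ≤ K := fun y hy =>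
    le_ciSup bddK (⟨y, hy⟩ : Icc (0:ℝ) 1)
  have hGle : ∀ y ∈ Icc (0:ℝ) 1, |g y| ≤ G := fun y hy =>
    le_ciSup bddG (⟨y, hy⟩ : Icc (0:ℝ) 1)
  have hK0 : 0 ≤ K := (abs_nonneg _).trans (hKle 0 h01)
  have hG0 : 0 ≤ G := (abs_nonneg _).trans (hGle 0 h01)
  have hE0 : 0 ≤ E := intervalIntegral.integral_nonneg zero_le_one
    (fun t ht => (hεpos t ht).le)
  -- bound on inner integral
  have hI : ∀ a ∈ Icc (0:ℝ) 1, |∫ t in (0:ℝ)..a, g t * ε t| ≤ G * E := by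
    intro a ha
    have int1 : IntervalIntegrable (fun t => |g t * ε t|) MeasureTheory.volume 0 a :=
      ((hg.mul hεc).abs).intervalIntegrable _ _
    have int2 : IntervalIntegrable (fun t => G * ε t) MeasureTheory.volume 0 a :=
      (continuous_const.mul hεc).intervalIntegrable _ _
    have h1 : |∫ t in (0:ℝ)..a, g t * ε t| ≤ ∫ t in (0:ℝ)..a, |g t * ε t| :=
      intervalIntegral.abs_integral_le_integral_abs ha.1
    have h2 : (∫ t in (0:ℝ)..a, |g t * ε t|) ≤ ∫ t in (0:ℝ)..a, G * ε t := by
      apply intervalIntegral.integral_mono_on ha.1 int1 int2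
      intro t ht
      have ht1 : t ∈ Icc (0:ℝ) 1 := ⟨ht.1, ht.2.trans ha.2⟩
      rw [abs_mul, abs_of_pos (hεpos t ht1)]
      exact mul_le_mul_of_nonneg_right (hGle t ht1) (hεpos t ht1).le
    have h3 : (∫ t in (0:ℝ)..a, G * ε t) ≤ ∫ t in (0:ℝ)..1, G * ε t := by
      have hadd : (∫ t in (0:ℝ)..a, G * ε t) + (∫ t in a..1, G * ε t)
          = ∫ t in (0:ℝ)..1, G * ε t :=
        intervalIntegral.integral_add_adjacent_intervals
          ((continuous_const.mul hεc).intervalIntegrable _ _)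
          ((continuous_const.mul hεc).intervalIntegrable _ _)
      have hnn : 0 ≤ ∫ t in a..1, G * ε t :=
        intervalIntegral.integral_nonneg ha.2
          (fun t ht => mul_nonneg hG0 (hεpos t ⟨ha.1.trans ht.1, ht.2⟩).le)
      linarith
    have h4 : (∫ t in (0:ℝ)..1, G * ε t) = G * E := by
      rw [hEdef, intervalIntegral.integral_const_mul]
    calc |∫ t in (0:ℝ)..a, g t * ε t| ≤ _ := h1
      _ ≤ _ := h2
      _ ≤ _ := h3
      _ = G * E := h4
  -- continuity of the primitive
  have hF : Continuous (fun s => ∫ t in (0:ℝ)..s, g t * ε t) :=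
    intervalIntegral.continuous_primitive
      (μ := MeasureTheory.volume) (fun a b => (hg.mul hεc).intervalIntegrable a b) 0
  -- bound on C
  have hC : |∫ s in (0:ℝ)..1, (1 / ε s) * ∫ t in (0:ℝ)..s, g t * ε t|
      ≤ (1 / m) * (G * E) := by
    have hcont : ContinuousOn (fun s => (1 / ε s) * ∫ t in (0:ℝ)..s, g t * ε t)
        (uIcc (0:ℝ) 1) := by
      rw [uIcc_of_le zero_le_one]
      exact (continuousOn_const.div hεc.continuousOn hεne).mul hF.continuousOn
    have int1 : IntervalIntegrable (fun s => (1 / ε s) * ∫ t in (0:ℝ)..s, g t * ε t)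
        MeasureTheory.volume 0 1 := hcont.intervalIntegrable
    have h1 : |∫ s in (0:ℝ)..1, (1 / ε s) * ∫ t in (0:ℝ)..s, g t * ε t|
        ≤ ∫ s in (0:ℝ)..1, |(1 / ε s) * ∫ t in (0:ℝ)..s, g t * ε t| :=
      intervalIntegral.abs_integral_le_integral_abs zero_le_one
    have h2 : (∫ s in (0:ℝ)..1, |(1 / ε s) * ∫ t in (0:ℝ)..s, g t * ε t|)
        ≤ ∫ s in (0:ℝ)..1, (1 / m) * (G * E) := by
      apply intervalIntegral.integral_mono_on zero_le_one int1.abs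
        (intervalIntegrable_const)
      intro s hs
      have hεs := hεpos s hs
      rw [abs_mul, abs_of_pos (by positivity : (0:ℝ) < 1 / ε s)]
      exact mul_le_mul (one_div_le_one_div_of_le hm (hbounds s hs).1)
        (hI s hs) (abs_nonneg _) (by positivity)
    have h3 : (∫ s in (0:ℝ)..1, (1 / m) * (G * E)) = (1 / m) * (G * E) := by
      simp
    linarith
  -- bound on D
  have hD : 1 / M ≤ ∫ s in (0:ℝ)..1, 1 / ε s := by
    have h1 : (∫ s in (0:ℝ)..1, (1 / M : ℝ)) ≤ ∫ s in (0:ℝ)..1, 1 / ε s := by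
      apply intervalIntegral.integral_mono_on zero_le_one intervalIntegrable_const
      · have : ContinuousOn (fun s => 1 / ε s) (uIcc (0:ℝ) 1) := by
          rw [uIcc_of_le zero_le_one]
          exact continuousOn_const.div hεc.continuousOn hεne
        exact this.intervalIntegrable
      · intro s hs
        exact one_div_le_one_div_of_le (hεpos s hs) (hbounds s hs).2
    simpa using h1
  have hDpos : 0 < ∫ s in (0:ℝ)..1, 1 / ε s := lt_of_lt_of_le (by positivity) hD
  set C := ∫ s in (0:ℝ)..1, (1 / ε s) * ∫ t in (0:ℝ)..s, g t * ε t with hCdef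
  set D := ∫ s in (0:ℝ)..1, 1 / ε s with hDdef
  have hCD : |C / D| ≤ M / m * (G * E) := by
    rw [abs_div, abs_of_pos hDpos, div_le_iff₀ hDpos]
    have h1 : (1:ℝ) ≤ M * D := by
      calc (1:ℝ) = M * (1 / M) := by field_simp
        _ ≤ M * D := by
            exact mul_le_mul_of_nonneg_left hD hM.le
    calc |C| ≤ 1 / m * (G * E) := hC
      _ = 1 / m * (G * E) * 1 := by ring
      _ ≤ 1 / m * (G * E) * (M * D) := by
          exact mul_le_mul_of_nonneg_left h1 (by positivity)
      _ = M / m * (G * E) * D := by ring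
  -- bound on r
  have hεx := hεpos x hx
  have hr : |deriv ε x / ε x ^ 2| ≤ K * (1 / m) := by
    have : deriv ε x / ε x ^ 2 = (deriv ε x / ε x) * (1 / ε x) := by
      rw [pow_two, ← div_div, div_eq_mul_one_div]
    rw [this, abs_mul, abs_of_pos (by positivity : (0:ℝ) < 1 / ε x)]
    exact mul_le_mul (hKle x hx) (one_div_le_one_div_of_le hm (hbounds x hx).1)
      (by positivity) hK0
  -- combine
  have habs : |(∫ t in (0:ℝ)..x, g t * ε t) - C / D| ≤ G * E + M / m * (G * E) :=
    (abs_sub _ _).trans (add_le_add (hI x hx) hCD)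
  have hmul : |deriv ε x / ε x ^ 2| * |(∫ t in (0:ℝ)..x, g t * ε t) - C / D|
      ≤ (K * (1 / m)) * (G * E + M / m * (G * E)) :=
    mul_le_mul hr habs (abs_nonneg _) (by positivity)
  calc |g x - (deriv ε x / (ε x) ^ 2) * ((∫ t in (0:ℝ)..x, g t * ε t) - C / D)|
      ≤ |g x| + |deriv ε x / ε x ^ 2| * |(∫ t in (0:ℝ)..x, g t * ε t) - C / D| := by
        rw [← abs_mul]; exact abs_sub _ _
    _ ≤ G + (K * (1 / m)) * (G * E + M / m * (G * E)) := add_le_add (hGle x hx) hmul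
    _ = (1 + K * (1 / m) * (1 + M / m) * E) * G := by ring
end

section
/- Let 1 < p < ∞ with conjugate exponent q, and let ε : [0,1] → ℝ be C¹ with 0 < m ≤ ε ≤ M. Then ‖A₁⁻¹‖_p ≤ 1 + ‖ε'/ε‖_p · (1 + M/m) · (M/m), where A₁⁻¹ = I − R₁ is the inverse of the integral operator A₁ acting on Lᵖ[0,1]. -/
open MeasureTheory intervalIntegral Set ENNReal

noncomputable instance probIoc01 : IsProbabilityMeasure (volume.restrict (Set.Ioc (0:ℝ) 1)) :=
  ⟨by simp [Real.volume_Ioc]⟩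

lemma memLp_of_continuousOn {p : ℝ≥0∞} {f : ℝ → ℝ} (hf : ContinuousOn f (Set.Icc 0 1)) :
    MemLp f p (volume.restrict (Set.Ioc (0:ℝ) 1)) := by
  obtain ⟨C, hC⟩ := isCompact_Icc.exists_bound_of_continuousOn hf
  refine MemLp.of_bound
    ((hf.mono Set.Ioc_subset_Icc_self).aestronglyMeasurable measurableSet_Ioc) C ?_
  exact (ae_restrict_iff' measurableSet_Ioc).mpr
    (ae_of_all _ fun x hx => hC x (Set.Ioc_subset_Icc_self hx))

lemma myMinkowski {p : ℝ} (hp : 1 < p) {u v : ℝ → ℝ}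
    (hu : MemLp u (ENNReal.ofReal p) (volume.restrict (Set.Ioc (0:ℝ) 1)))
    (hv : MemLp v (ENNReal.ofReal p) (volume.restrict (Set.Ioc (0:ℝ) 1))) :
    (∫ x in (0:ℝ)..1, |u x - v x| ^ p) ^ (1/p)
      ≤ (∫ x in (0:ℝ)..1, |u x| ^ p) ^ (1/p) + (∫ x in (0:ℝ)..1, |v x| ^ p) ^ (1/p) := by
  have hp0 : (0:ℝ) < p := lt_trans one_pos hp
  have hP0 : ENNReal.ofReal p ≠ 0 := by simp [ENNReal.ofReal_eq_zero, not_le, hp0]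
  have hPt : ENNReal.ofReal p ≠ ⊤ := ENNReal.ofReal_ne_top
  have hP1 : (1:ℝ≥0∞) ≤ ENNReal.ofReal p := by
    rw [← ENNReal.ofReal_one]; exact ENNReal.ofReal_le_ofReal hp.le
  have h1 := eLpNorm_sub_le hu.1 hv.1 hP1
  rw [hu.eLpNorm_eq_integral_rpow_norm hP0 hPt, hv.eLpNorm_eq_integral_rpow_norm hP0 hPt,
    (hu.sub hv).eLpNorm_eq_integral_rpow_norm hP0 hPt,
    ← ENNReal.ofReal_add (by positivity) (by positivity)] at h1
  have h2 := (ENNReal.ofReal_le_ofReal_iff (by positivity)).1 h1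
  have hT : (ENNReal.ofReal p).toReal = p := ENNReal.toReal_ofReal hp0.le
  simp only [hT, Real.norm_eq_abs, Pi.sub_apply, ← one_div] at h2
  rw [intervalIntegral.integral_of_le zero_le_one, intervalIntegral.integral_of_le zero_le_one,
    intervalIntegral.integral_of_le zero_le_one]
  exact h2

lemma myHolder {p : ℝ} (hp : 1 < p) {u : ℝ → ℝ}
    (hu : MemLp u (ENNReal.ofReal p) (volume.restrict (Set.Ioc (0:ℝ) 1))) :
    (∫ x in (0:ℝ)..1, |u x|) ≤ (∫ x in (0:ℝ)..1, |u x| ^ p) ^ (1/p) := by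
  have hpq : p.HolderConjugate (p / (p - 1)) := Real.HolderConjugate.conjExponent hp
  set μ := volume.restrict (Set.Ioc (0:ℝ) 1)
  have h := integral_mul_le_Lp_mul_Lq_of_nonneg (μ := μ) hpq
    (f := fun x => |u x|) (g := fun _ => 1)
    (ae_of_all _ fun x => abs_nonneg _) (ae_of_all _ fun _ => zero_le_one)
    (by simpa [Real.norm_eq_abs] using hu.norm) (memLp_const 1)
  simp only [mul_one, Real.one_rpow, MeasureTheory.integral_const, measure_univ, probReal_univ,
    ENNReal.toReal_one, one_smul, smul_eq_mul] at h
  rw [intervalIntegral.integral_of_le zero_le_one, intervalIntegral.integral_of_le zero_le_one]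
  exact h

lemma myDomination {p c : ℝ} (hp : 0 < p) (hc : 0 ≤ c) {v w : ℝ → ℝ}
    (hv : IntervalIntegrable (fun x => |v x| ^ p) volume 0 1)
    (hw : IntervalIntegrable (fun x => |w x| ^ p) volume 0 1)
    (hle : ∀ x ∈ Set.Icc (0:ℝ) 1, |v x| ≤ c * |w x|) :
    (∫ x in (0:ℝ)..1, |v x| ^ p) ^ (1/p) ≤ c * (∫ x in (0:ℝ)..1, |w x| ^ p) ^ (1/p) := by
  have h1 : (∫ x in (0:ℝ)..1, |v x| ^ p) ≤ ∫ x in (0:ℝ)..1, c ^ p * |w x| ^ p := by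
    refine intervalIntegral.integral_mono_on zero_le_one hv (hw.const_mul _) fun x hx => ?_
    calc |v x| ^ p ≤ (c * |w x|) ^ p :=
          Real.rpow_le_rpow (abs_nonneg _) (hle x hx) hp.le
      _ = c ^ p * |w x| ^ p := Real.mul_rpow hc (abs_nonneg _)
  have h2 : (∫ x in (0:ℝ)..1, c ^ p * |w x| ^ p) = c ^ p * ∫ x in (0:ℝ)..1, |w x| ^ p :=
    intervalIntegral.integral_const_mul _ _
  have hW : 0 ≤ ∫ x in (0:ℝ)..1, |w x| ^ p :=
    intervalIntegral.integral_nonneg zero_le_one fun x _ => Real.rpow_nonneg (abs_nonneg _) _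
  calc (∫ x in (0:ℝ)..1, |v x| ^ p) ^ (1/p)
      ≤ (c ^ p * ∫ x in (0:ℝ)..1, |w x| ^ p) ^ (1/p) := by
        refine Real.rpow_le_rpow ?_ (h2 ▸ h1) (by positivity)
        exact intervalIntegral.integral_nonneg zero_le_one
          fun x _ => Real.rpow_nonneg (abs_nonneg _) _
    _ = c * (∫ x in (0:ℝ)..1, |w x| ^ p) ^ (1/p) := by
        rw [Real.mul_rpow (by positivity) hW, ← Real.rpow_mul hc,
          mul_one_div_cancel hp.ne', Real.rpow_one]

/-- `Lᵖ` bound for the inverse operator `A₁⁻¹ = I - R₁` for `1 < p < ∞`: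
`‖A₁⁻¹g‖_p ≤ (1 + ‖ε'/ε‖_p (1 + M/m)(M/m)) ‖g‖_p`. -/
theorem A1_inverse_Lp_norm_bound (ε : ℝ → ℝ) (p : ℝ) (hp : 1 < p) (m M : ℝ)
    (hε : ContDiff ℝ 1 ε) (hm : 0 < m)
    (hbounds : ∀ x ∈ Set.Icc (0:ℝ) 1, m ≤ ε x ∧ ε x ≤ M) :
    ∀ g : ℝ → ℝ, Continuous g →
      (∫ x in (0:ℝ)..1,
          |g x - (deriv ε x / (ε x) ^ 2) *
            ((∫ t in (0:ℝ)..x, g t * ε t) -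
              (∫ s in (0:ℝ)..1, (1 / ε s) * ∫ t in (0:ℝ)..s, g t * ε t) /
                (∫ s in (0:ℝ)..1, 1 / ε s))| ^ p) ^ (1 / p) ≤
        (1 + (∫ x in (0:ℝ)..1, |deriv ε x / ε x| ^ p) ^ (1 / p) * (1 + M / m) * (M / m)) *
          (∫ x in (0:ℝ)..1, |g x| ^ p) ^ (1 / p) := by
  intro g hg
  have h01 : (0:ℝ) ≤ 1 := zero_le_one
  have hp0 : (0:ℝ) < p := lt_trans one_pos hp
  have hεc : Continuous ε := hε.continuous
  have hεd : Continuous (deriv ε) := hε.continuous_deriv le_rfl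
  have hεpos : ∀ x ∈ Set.Icc (0:ℝ) 1, 0 < ε x := fun x hx => lt_of_lt_of_le hm (hbounds x hx).1
  have hmM : m ≤ M := (hbounds 0 ⟨le_rfl, h01⟩).1.trans (hbounds 0 ⟨le_rfl, h01⟩).2
  have hM0 : 0 < M := lt_of_lt_of_le hm hmM
  have hMm : 1 ≤ M / m := (one_le_div hm).2 hmM
  -- continuity of the primitive
  have hFcont : Continuous fun x => ∫ t in (0:ℝ)..x, g t * ε t :=
    intervalIntegral.continuous_primitive (fun a b => (hg.mul hεc).intervalIntegrable a b) 0
  have hG1 : (0:ℝ) ≤ ∫ x in (0:ℝ)..1, |g x| :=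
    intervalIntegral.integral_nonneg h01 fun x _ => abs_nonneg _
  -- bound on the primitive
  have hB : ∀ x ∈ Set.Icc (0:ℝ) 1,
      |∫ t in (0:ℝ)..x, g t * ε t| ≤ M * ∫ t in (0:ℝ)..1, |g t| := by
    intro x hx
    have h1 : |∫ t in (0:ℝ)..x, g t * ε t| ≤ ∫ t in (0:ℝ)..x, |g t * ε t| :=
      intervalIntegral.abs_integral_le_integral_abs hx.1
    have h2 : (∫ t in (0:ℝ)..x, |g t * ε t|) ≤ ∫ t in (0:ℝ)..1, |g t * ε t| :=
      intervalIntegral.integral_mono_interval le_rfl hx.1 hx.2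
        (ae_of_all _ fun t => abs_nonneg _) ((hg.mul hεc).abs.intervalIntegrable 0 1)
    have h3 : (∫ t in (0:ℝ)..1, |g t * ε t|) ≤ ∫ t in (0:ℝ)..1, M * |g t| := by
      refine intervalIntegral.integral_mono_on h01 ((hg.mul hεc).abs.intervalIntegrable 0 1)
        ((continuous_const.mul hg.abs).intervalIntegrable 0 1) fun t ht => ?_
      rw [abs_mul, abs_of_pos (hεpos t ht), mul_comm]
      exact mul_le_mul_of_nonneg_right (hbounds t ht).2 (abs_nonneg _)
    have h4 : (∫ t in (0:ℝ)..1, M * |g t|) = M * ∫ t in (0:ℝ)..1, |g t| :=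
      intervalIntegral.integral_const_mul _ _
    linarith
  -- denominator bounds
  have hεIcont : ContinuousOn (fun s => 1 / ε s) (Set.Icc (0:ℝ) 1) :=
    continuousOn_const.div hεc.continuousOn fun x hx => (hεpos x hx).ne'
  have hεIint : IntervalIntegrable (fun s => 1 / ε s) volume 0 1 :=
    ContinuousOn.intervalIntegrable (by rw [Set.uIcc_of_le h01]; exact hεIcont)
  have hD : 1 / M ≤ ∫ s in (0:ℝ)..1, 1 / ε s := by
    have := intervalIntegral.integral_mono_on h01 intervalIntegrable_const hεIint
      (fun s hs => one_div_le_one_div_of_le (hεpos s hs) (hbounds s hs).2)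
    simpa using this
  have hDpos : 0 < ∫ s in (0:ℝ)..1, 1 / ε s := lt_of_lt_of_le (by positivity) hD
  -- numerator bound
  have hFIcont : ContinuousOn (fun s => (1 / ε s) * ∫ t in (0:ℝ)..s, g t * ε t)
      (Set.Icc (0:ℝ) 1) := hεIcont.mul hFcont.continuousOn
  have hN : |∫ s in (0:ℝ)..1, (1 / ε s) * ∫ t in (0:ℝ)..s, g t * ε t|
      ≤ (∫ s in (0:ℝ)..1, 1 / ε s) * (M * ∫ t in (0:ℝ)..1, |g t|) := by
    have h1 : |∫ s in (0:ℝ)..1, (1 / ε s) * ∫ t in (0:ℝ)..s, g t * ε t|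
        ≤ ∫ s in (0:ℝ)..1, |(1 / ε s) * ∫ t in (0:ℝ)..s, g t * ε t| :=
      intervalIntegral.abs_integral_le_integral_abs h01
    have h2 : (∫ s in (0:ℝ)..1, |(1 / ε s) * ∫ t in (0:ℝ)..s, g t * ε t|)
        ≤ ∫ s in (0:ℝ)..1, (1 / ε s) * (M * ∫ t in (0:ℝ)..1, |g t|) := by
      refine intervalIntegral.integral_mono_on h01
        (ContinuousOn.intervalIntegrable (by rw [Set.uIcc_of_le h01]; exact hFIcont.abs))
        (hεIint.mul_const _) fun s hs => ?_
      rw [abs_mul, abs_of_pos (one_div_pos.mpr (hεpos s hs))]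
      exact mul_le_mul_of_nonneg_left (hB s hs) (one_div_pos.mpr (hεpos s hs)).le
    have h3 : (∫ s in (0:ℝ)..1, (1 / ε s) * (M * ∫ t in (0:ℝ)..1, |g t|))
        = (∫ s in (0:ℝ)..1, 1 / ε s) * (M * ∫ t in (0:ℝ)..1, |g t|) :=
      intervalIntegral.integral_mul_const _ _
    linarith
  have hND : |(∫ s in (0:ℝ)..1, (1 / ε s) * ∫ t in (0:ℝ)..s, g t * ε t) /
      (∫ s in (0:ℝ)..1, 1 / ε s)| ≤ M * ∫ t in (0:ℝ)..1, |g t| := by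
    rw [abs_div, abs_of_pos hDpos, div_le_iff₀ hDpos]
    calc |∫ s in (0:ℝ)..1, (1 / ε s) * ∫ t in (0:ℝ)..s, g t * ε t|
        ≤ (∫ s in (0:ℝ)..1, 1 / ε s) * (M * ∫ t in (0:ℝ)..1, |g t|) := hN
      _ = (M * ∫ t in (0:ℝ)..1, |g t|) * (∫ s in (0:ℝ)..1, 1 / ε s) := mul_comm _ _
  -- pointwise bound on v
  have hpt : ∀ x ∈ Set.Icc (0:ℝ) 1,
      |(deriv ε x / (ε x) ^ 2) *
          ((∫ t in (0:ℝ)..x, g t * ε t) -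
            (∫ s in (0:ℝ)..1, (1 / ε s) * ∫ t in (0:ℝ)..s, g t * ε t) /
              (∫ s in (0:ℝ)..1, 1 / ε s))|
        ≤ (2 * (M / m) * ∫ t in (0:ℝ)..1, |g t|) * |deriv ε x / ε x| := by
    intro x hx
    have hεx := hεpos x hx
    have h5 : |(∫ t in (0:ℝ)..x, g t * ε t) -
        (∫ s in (0:ℝ)..1, (1 / ε s) * ∫ t in (0:ℝ)..s, g t * ε t) /
          (∫ s in (0:ℝ)..1, 1 / ε s)| ≤ 2 * (M * ∫ t in (0:ℝ)..1, |g t|) := by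
      have htri := abs_sub (∫ t in (0:ℝ)..x, g t * ε t)
        ((∫ s in (0:ℝ)..1, (1 / ε s) * ∫ t in (0:ℝ)..s, g t * ε t) /
          (∫ s in (0:ℝ)..1, 1 / ε s))
      have := hB x hx
      linarith [hND]
    have h6 : |deriv ε x / (ε x) ^ 2| = |deriv ε x / ε x| / ε x := by
      rw [sq, ← div_div, abs_div, abs_of_pos hεx]
    have h7 : |deriv ε x / ε x| / ε x ≤ |deriv ε x / ε x| / m :=
      div_le_div_of_nonneg_left (abs_nonneg _) hm (hbounds x hx).1
    calc |(deriv ε x / (ε x) ^ 2) * _| = |deriv ε x / (ε x) ^ 2| *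
          |(∫ t in (0:ℝ)..x, g t * ε t) -
            (∫ s in (0:ℝ)..1, (1 / ε s) * ∫ t in (0:ℝ)..s, g t * ε t) /
              (∫ s in (0:ℝ)..1, 1 / ε s)| := abs_mul _ _
      _ ≤ (|deriv ε x / ε x| / m) * (2 * (M * ∫ t in (0:ℝ)..1, |g t|)) := by
          refine mul_le_mul (h6 ▸ h7) h5 (abs_nonneg _) (by positivity)
      _ = (2 * (M / m) * ∫ t in (0:ℝ)..1, |g t|) * |deriv ε x / ε x| := by
          field_simp
  -- continuity of v and e on Icc
  have hvcont : ContinuousOn (fun x => (deriv ε x / (ε x) ^ 2) *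
      ((∫ t in (0:ℝ)..x, g t * ε t) -
        (∫ s in (0:ℝ)..1, (1 / ε s) * ∫ t in (0:ℝ)..s, g t * ε t) /
          (∫ s in (0:ℝ)..1, 1 / ε s))) (Set.Icc (0:ℝ) 1) := by
    refine ContinuousOn.mul (hεd.continuousOn.div ((hεc.pow 2).continuousOn)
      fun x hx => pow_ne_zero 2 (hεpos x hx).ne') (hFcont.continuousOn.sub continuousOn_const)
  have hecont : ContinuousOn (fun x => deriv ε x / ε x) (Set.Icc (0:ℝ) 1) :=
    hεd.continuousOn.div hεc.continuousOn fun x hx => (hεpos x hx).ne'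
  -- Memℒp facts
  have huMem : MemLp g (ENNReal.ofReal p) (volume.restrict (Set.Ioc (0:ℝ) 1)) :=
    memLp_of_continuousOn hg.continuousOn
  have hvMem := memLp_of_continuousOn (p := ENNReal.ofReal p) hvcont
  have hvInt : IntervalIntegrable (fun x => |(deriv ε x / (ε x) ^ 2) *
      ((∫ t in (0:ℝ)..x, g t * ε t) -
        (∫ s in (0:ℝ)..1, (1 / ε s) * ∫ t in (0:ℝ)..s, g t * ε t) /
          (∫ s in (0:ℝ)..1, 1 / ε s))| ^ p) volume 0 1 :=
    ContinuousOn.intervalIntegrable (by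
      rw [Set.uIcc_of_le h01]
      exact hvcont.abs.rpow_const fun x hx => Or.inr hp0.le)
  have heInt : IntervalIntegrable (fun x => |deriv ε x / ε x| ^ p) volume 0 1 :=
    ContinuousOn.intervalIntegrable (by
      rw [Set.uIcc_of_le h01]
      exact hecont.abs.rpow_const fun x hx => Or.inr hp0.le)
  -- assemble
  have hmink := myMinkowski hp huMem hvMem
  have hdom := myDomination hp0 (by positivity) hvInt heInt hpt
  have hhold := myHolder hp huMem
  have hK0 : (0:ℝ) ≤ (∫ x in (0:ℝ)..1, |deriv ε x / ε x| ^ p) ^ (1/p) :=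
    Real.rpow_nonneg (intervalIntegral.integral_nonneg h01
      fun x _ => Real.rpow_nonneg (abs_nonneg _) _) _
  have hGp0 : (0:ℝ) ≤ (∫ x in (0:ℝ)..1, |g x| ^ p) ^ (1/p) :=
    Real.rpow_nonneg (intervalIntegral.integral_nonneg h01
      fun x _ => Real.rpow_nonneg (abs_nonneg _) _) _
  have key : (0:ℝ) ≤ ((∫ x in (0:ℝ)..1, |deriv ε x / ε x| ^ p) ^ (1/p)) * (M / m) *
      ((1 + M / m) * ((∫ x in (0:ℝ)..1, |g x| ^ p) ^ (1/p)) - 2 * ∫ x in (0:ℝ)..1, |g x|) := by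
    have h8 : 0 ≤ (1 + M / m) * ((∫ x in (0:ℝ)..1, |g x| ^ p) ^ (1/p))
        - 2 * ∫ x in (0:ℝ)..1, |g x| := by nlinarith
    positivity
  refine le_trans hmink ?_
  nlinarith [hdom, key, mul_nonneg hK0 (le_trans zero_le_one hMm)]
end

section
/- For ε_δ(x) = 2 + tanh(δ(x−x₀)) on [0,2] with δ ≥ 10, x₀ ∈ (1/10, 19/10), and 1 ≤ p < ∞, there is a constant C(p) > 0 independent of δ such that ‖ε_δ'‖_p ≥ C(p) · δ^{1−1/p}. -/
lemma myHasDerivAt_tanh (x : ℝ) :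
    HasDerivAt Real.tanh (1 / Real.cosh x ^ 2) x := by
  have h := (Real.hasDerivAt_sinh x).div (Real.hasDerivAt_cosh x) (Real.cosh_pos x).ne'
  have heq : (Real.cosh x * Real.cosh x - Real.sinh x * Real.sinh x) / Real.cosh x ^ 2
      = 1 / Real.cosh x ^ 2 := by
    have := Real.cosh_sq x
    congr 1
    nlinarith
  rw [heq] at h
  have : Real.tanh = fun x => Real.sinh x / Real.cosh x := by
    funext y; exact Real.tanh_eq_sinh_div_cosh y
  rw [this]
  exact h

lemma cosh_half_le_two : Real.cosh (1/2 : ℝ) ≤ 2 := by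
  rw [Real.cosh_eq]
  have h1 : Real.exp (1/2 : ℝ) < 2 := by
    have h := Real.exp_one_lt_d9
    have hsq : Real.exp (1/2 : ℝ) ^ 2 = Real.exp 1 := by
      rw [← Real.exp_nat_mul]; norm_num
    nlinarith [Real.exp_pos (1/2 : ℝ)]
  have h2 : Real.exp (-(1/2) : ℝ) ≤ 1 := by
    rw [Real.exp_le_one_iff]; norm_num
  linarith

/-- Lower bound on the `Lᵖ` norm of `ε_δ'`: there is `C(p) > 0`, independent of `δ`
and `x₀`, with `‖ε_δ'‖_p ≥ C(p) δ^(1-1/p)` for all `δ ≥ 10` and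
`x₀ ∈ (1/10, 19/10)`. -/
theorem eps_delta_deriv_Lp_lower (p : ℝ) (hp : 1 ≤ p) :
    ∃ C > (0:ℝ), ∀ δ x₀ : ℝ, 10 ≤ δ → x₀ ∈ Set.Ioo (1/10 : ℝ) (19/10) →
      ∀ ε : ℝ → ℝ, (∀ x, ε x = 2 + Real.tanh (δ * (x - x₀))) →
        C * δ ^ (1 - 1 / p) ≤ (∫ x in (0:ℝ)..2, |deriv ε x| ^ p) ^ (1 / p) := by
  refine ⟨1/4, by norm_num, ?_⟩
  intro δ x₀ hδ hx₀ ε hε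
  have hδ0 : (0:ℝ) < δ := by linarith
  have hp0 : (0:ℝ) < p := by linarith
  obtain ⟨hx₀1, hx₀2⟩ := hx₀
  have hεe : ε = fun x => 2 + Real.tanh (δ * (x - x₀)) := funext hε
  subst hεe
  -- derivative formula
  have hderiv : ∀ x, deriv (fun x => 2 + Real.tanh (δ * (x - x₀))) x
      = δ / Real.cosh (δ * (x - x₀)) ^ 2 := by
    intro x
    have h1 : HasDerivAt (fun x : ℝ => δ * (x - x₀)) δ x := by
      simpa using ((hasDerivAt_id x).sub_const x₀).const_mul δ
    have h2 := (myHasDerivAt_tanh (δ * (x - x₀))).comp x h1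
    have h3 := h2.const_add 2
    have h3' : HasDerivAt (fun x => 2 + Real.tanh (δ * (x - x₀)))
        (1 / Real.cosh (δ * (x - x₀)) ^ 2 * δ) x := h3
    rw [h3'.deriv]
    ring
  have hcont : Continuous fun x => |deriv (fun x => 2 + Real.tanh (δ * (x - x₀))) x| ^ p := by
    have hc : Continuous fun x => δ / Real.cosh (δ * (x - x₀)) ^ 2 := by
      apply continuous_const.div
      · exact (Real.continuous_cosh.comp (by fun_prop)).pow 2
      · intro x
        positivity
    have : (fun x => |deriv (fun x => 2 + Real.tanh (δ * (x - x₀))) x| ^ p)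
        = fun x => |δ / Real.cosh (δ * (x - x₀)) ^ 2| ^ p := by
      funext x; rw [hderiv x]
    rw [this]
    exact (hc.abs).rpow_const fun x => Or.inr hp0.le
  set a := x₀ - 1/(2*δ) with ha
  set b := x₀ + 1/(2*δ) with hb
  have hd2 : 1/(2*δ) ≤ 1/20 := by
    rw [div_le_div_iff₀ (by linarith) (by norm_num)]; linarith
  have hd2' : (0:ℝ) < 1/(2*δ) := by positivity
  have h0a : (0:ℝ) ≤ a := by rw [ha]; linarith
  have hab : a ≤ b := by rw [ha, hb]; linarith
  have hb2 : b ≤ 2 := by rw [hb]; linarith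
  -- pointwise lower bound on [a,b]
  have hpt : ∀ x ∈ Set.Icc a b,
      (δ/4 : ℝ) ^ p ≤ |deriv (fun x => 2 + Real.tanh (δ * (x - x₀))) x| ^ p := by
    intro x hx
    rw [hderiv x]
    have habs : |δ * (x - x₀)| ≤ 1/2 := by
      rw [abs_mul, abs_of_pos hδ0]
      obtain ⟨hx1, hx2⟩ := hx
      rw [ha] at hx1
      rw [hb] at hx2
      have : |x - x₀| ≤ 1/(2*δ) := by
        rw [abs_le]
        constructor <;> linarith
      calc δ * |x - x₀| ≤ δ * (1/(2*δ)) := by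
            exact mul_le_mul_of_nonneg_left this hδ0.le
        _ = 1/2 := by field_simp
    have hcosh : Real.cosh (δ * (x - x₀)) ≤ 2 := by
      calc Real.cosh (δ * (x - x₀)) ≤ Real.cosh (1/2) := by
            rw [Real.cosh_le_cosh]
            rw [abs_of_pos (by norm_num : (0:ℝ) < 1/2)]
            exact habs
        _ ≤ 2 := cosh_half_le_two
    have hcosh1 : (1:ℝ) ≤ Real.cosh (δ * (x - x₀)) := Real.one_le_cosh _
    have hle : (δ/4 : ℝ) ≤ |δ / Real.cosh (δ * (x - x₀)) ^ 2| := by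
      rw [abs_of_pos (by positivity)]
      rw [div_le_div_iff₀ (by norm_num) (by positivity)]
      have hsq : Real.cosh (δ * (x - x₀)) ^ 2 ≤ 4 := by nlinarith
      nlinarith [mul_nonneg hδ0.le (by linarith : (0:ℝ) ≤ 4 - Real.cosh (δ * (x - x₀)) ^ 2)]
    exact Real.rpow_le_rpow (by positivity) hle hp0.le
  -- integral lower bound
  have hint1 : (∫ x in a..b, (δ/4 : ℝ) ^ p)
      ≤ ∫ x in a..b, |deriv (fun x => 2 + Real.tanh (δ * (x - x₀))) x| ^ p := by
    apply intervalIntegral.integral_mono_on hab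
    · exact intervalIntegrable_const
    · exact hcont.intervalIntegrable a b
    · exact hpt
  have hint2 : (∫ x in a..b, |deriv (fun x => 2 + Real.tanh (δ * (x - x₀))) x| ^ p)
      ≤ ∫ x in (0:ℝ)..2, |deriv (fun x => 2 + Real.tanh (δ * (x - x₀))) x| ^ p := by
    apply intervalIntegral.integral_mono_interval h0a hab hb2
    · filter_upwards with x
      positivity
    · exact hcont.intervalIntegrable 0 2
  have hba : b - a = 1/δ := by
    rw [hb, ha]
    field_simp
    norm_num
  have hval : (∫ x in a..b, (δ/4 : ℝ) ^ p) = (1/δ) * (δ/4) ^ p := by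
    rw [intervalIntegral.integral_const, smul_eq_mul, hba]
  have hkey : (1/δ) * (δ/4) ^ p
      ≤ ∫ x in (0:ℝ)..2, |deriv (fun x => 2 + Real.tanh (δ * (x - x₀))) x| ^ p := by
    rw [← hval]; exact hint1.trans hint2
  -- take rpow
  have hmono := Real.rpow_le_rpow (by positivity) hkey (by positivity : (0:ℝ) ≤ 1/p)
  refine le_trans ?_ hmono
  -- compute ((1/δ) * (δ/4)^p)^(1/p) = 1/4 * δ^(1-1/p)
  have hppos : p ≠ 0 := hp0.ne'
  have h1 : ((1/δ) * (δ/4 : ℝ) ^ p) ^ (1/p)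
      = (1/δ) ^ (1/p) * ((δ/4 : ℝ) ^ p) ^ (1/p) :=
    Real.mul_rpow (by positivity) (by positivity)
  have h2 : ((δ/4 : ℝ) ^ p) ^ (1/p) = δ/4 := by
    rw [← Real.rpow_mul (by positivity : (0:ℝ) ≤ δ/4), mul_one_div, div_self hppos,
      Real.rpow_one]
  have h3 : ((1/δ) : ℝ) ^ (1/p) = δ ^ (-(1/p)) := by
    rw [one_div, Real.inv_rpow hδ0.le, ← Real.rpow_neg hδ0.le]
  rw [h1, h2, h3]
  have h4 : δ ^ (1 - 1/p) = δ * δ ^ (-(1/p)) := by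
    rw [show (1 - 1/p : ℝ) = 1 + (-(1/p)) by ring, Real.rpow_add hδ0, Real.rpow_one]
  rw [h4]
  apply le_of_eq
  ring
end

section
/- Let ε : [0,1] → ℝ be C¹ and strictly positive, f continuous, and let u(x) := ∫₀¹ G(x,t) σ(t) dt where σ is continuous and satisfies σ(x) + (ε'(x)/ε(x)) ∫₀¹ G_x(x,t) σ(t) dt = f(x)/ε(x) for all x. Then u(0) = u(1) = 0 and (ε u')' = f on (0,1). -/
open MeasureTheory Set intervalIntegral

/-- interval integrability via equality on the open-closed interval with a continuous function -/
lemma intervalIntegrable_of_eqOn_Ioc {F g : ℝ → ℝ} {a b : ℝ} (hab : a ≤ b)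
    (hg : Continuous g) (h : ∀ t ∈ Set.Ioc a b, F t = g t) :
    IntervalIntegrable F MeasureTheory.volume a b := by
  rw [intervalIntegrable_iff, Set.uIoc_of_le hab]
  exact (hg.integrableOn_Ioc).congr_fun (fun t ht => (h t ht).symm) measurableSet_Ioc

/-- If `σ` solves the second-kind integral equation
`σ(x) + (ε'(x)/ε(x)) ∫₀¹ G_x(x,t) σ(t) dt = f(x)/ε(x)`, then
`u(x) = ∫₀¹ G(x,t) σ(t) dt` satisfies `u(0) = u(1) = 0` and `(ε u')' = f` on `(0,1)`. -/
theorem integral_representation_solves_bvp (ε f σ : ℝ → ℝ)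
    (hε : ContDiff ℝ 1 ε) (hεpos : ∀ x ∈ Set.Icc (0:ℝ) 1, 0 < ε x)
    (hf : Continuous f) (hσ : Continuous σ)
    (G Gx : ℝ → ℝ → ℝ)
    (hG : ∀ x t : ℝ, G x t = if x < t then x * (t - 1) else t * (x - 1))
    (hGx : ∀ x t : ℝ, Gx x t = if x < t then t - 1 else t)
    (hinteq : ∀ x ∈ Set.Icc (0:ℝ) 1,
      σ x + (deriv ε x / ε x) * (∫ t in (0:ℝ)..1, Gx x t * σ t) = f x / ε x)
    (u : ℝ → ℝ) (hu : ∀ x, u x = ∫ t in (0:ℝ)..1, G x t * σ t) :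
    u 0 = 0 ∧ u 1 = 0 ∧
      ∀ x ∈ Set.Ioo (0:ℝ) 1, deriv (fun y => ε y * deriv u y) x = f x := by
  have hcont1 : Continuous fun t : ℝ => t * σ t := continuous_id.mul hσ
  have hcont2 : Continuous fun t : ℝ => (t - 1) * σ t := (continuous_id.sub continuous_const).mul hσ
  set A : ℝ → ℝ := fun x => ∫ t in (0:ℝ)..x, t * σ t with hAdef
  set C : ℝ → ℝ := fun x => ∫ t in (0:ℝ)..x, (t - 1) * σ t with hCdef
  set K : ℝ := ∫ t in (0:ℝ)..1, (t - 1) * σ t with hKdef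
  have hA' : ∀ x : ℝ, HasDerivAt A (x * σ x) x := fun x =>
    (hcont1.integral_hasStrictDerivAt 0 x).hasDerivAt
  have hC' : ∀ x : ℝ, HasDerivAt C ((x - 1) * σ x) x := fun x =>
    (hcont2.integral_hasStrictDerivAt 0 x).hasDerivAt
  -- u(0) = 0
  have hu0 : u 0 = 0 := by
    rw [hu]
    rw [intervalIntegral.integral_congr_ae (g := fun _ => (0:ℝ))
      (Filter.Eventually.of_forall fun t ht => ?_), intervalIntegral.integral_zero]
    rw [Set.uIoc_of_le (by norm_num : (0:ℝ) ≤ 1)] at ht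
    rw [hG]
    rw [if_pos ht.1]
    ring
  have hu1 : u 1 = 0 := by
    rw [hu]
    rw [intervalIntegral.integral_congr_ae (g := fun _ => (0:ℝ))
      (Filter.Eventually.of_forall fun t ht => ?_), intervalIntegral.integral_zero]
    rw [Set.uIoc_of_le (by norm_num : (0:ℝ) ≤ 1)] at ht
    rw [hG, if_neg (not_lt.2 ht.2)]
    ring
  refine ⟨hu0, hu1, fun x hx => ?_⟩
  -- u = φ on Icc 0 1
  have hu_eq : ∀ y ∈ Set.Icc (0:ℝ) 1, u y = (y - 1) * A y + y * (K - C y) := by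
    intro y hy
    have h1 : IntervalIntegrable (fun t => G y t * σ t) volume 0 y :=
      intervalIntegrable_of_eqOn_Ioc (g := fun t => (y - 1) * (t * σ t)) hy.1
        (continuous_const.mul hcont1)
        (fun t ht => by rw [hG, if_neg (not_lt.2 ht.2)]; ring)
    have h2 : IntervalIntegrable (fun t => G y t * σ t) volume y 1 :=
      intervalIntegrable_of_eqOn_Ioc (g := fun t => y * ((t - 1) * σ t)) hy.2
        (continuous_const.mul hcont2)
        (fun t ht => by rw [hG, if_pos ht.1]; ring)
    rw [hu, ← intervalIntegral.integral_add_adjacent_intervals h1 h2]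
    have e1 : (∫ t in (0:ℝ)..y, G y t * σ t) = (y - 1) * A y := by
      rw [hAdef, ← intervalIntegral.integral_const_mul]
      refine intervalIntegral.integral_congr_ae (Filter.Eventually.of_forall fun t ht => ?_)
      rw [Set.uIoc_of_le hy.1] at ht
      rw [hG, if_neg (not_lt.2 ht.2)]; ring
    have e2 : (∫ t in y..1, G y t * σ t) = y * (K - C y) := by
      have : (∫ t in y..1, G y t * σ t) = ∫ t in y..1, y * ((t - 1) * σ t) := by
        refine intervalIntegral.integral_congr_ae (Filter.Eventually.of_forall fun t ht => ?_)
        rw [Set.uIoc_of_le hy.2] at ht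
        rw [hG, if_pos ht.1]; ring
      rw [this, intervalIntegral.integral_const_mul, hKdef, hCdef]
      rw [← intervalIntegral.integral_interval_sub_left (hcont2.intervalIntegrable 0 1)
        (hcont2.intervalIntegrable 0 y)]
    rw [e1, e2]
  -- ∫ Gx = A + (K - C) on Icc 0 1
  have hv_eq : ∀ y ∈ Set.Icc (0:ℝ) 1, (∫ t in (0:ℝ)..1, Gx y t * σ t) = A y + (K - C y) := by
    intro y hy
    have h1 : IntervalIntegrable (fun t => Gx y t * σ t) volume 0 y :=
      intervalIntegrable_of_eqOn_Ioc hy.1 hcont1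
        (fun t ht => by rw [hGx, if_neg (not_lt.2 ht.2)])
    have h2 : IntervalIntegrable (fun t => Gx y t * σ t) volume y 1 :=
      intervalIntegrable_of_eqOn_Ioc hy.2 hcont2
        (fun t ht => by rw [hGx, if_pos ht.1])
    rw [← intervalIntegral.integral_add_adjacent_intervals h1 h2]
    have e1 : (∫ t in (0:ℝ)..y, Gx y t * σ t) = A y := by
      refine intervalIntegral.integral_congr_ae (Filter.Eventually.of_forall fun t ht => ?_)
      rw [Set.uIoc_of_le hy.1] at ht
      rw [hGx, if_neg (not_lt.2 ht.2)]
    have e2 : (∫ t in y..1, Gx y t * σ t) = K - C y := by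
      have : (∫ t in y..1, Gx y t * σ t) = ∫ t in y..1, (t - 1) * σ t := by
        refine intervalIntegral.integral_congr_ae (Filter.Eventually.of_forall fun t ht => ?_)
        rw [Set.uIoc_of_le hy.2] at ht
        rw [hGx, if_pos ht.1]
      rw [this, hKdef, hCdef,
        ← intervalIntegral.integral_interval_sub_left (hcont2.intervalIntegrable 0 1)
          (hcont2.intervalIntegrable 0 y)]
    rw [e1, e2]
  -- derivative of u on Ioo 0 1
  have hmemnhds : Set.Ioo (0:ℝ) 1 ∈ nhds x := isOpen_Ioo.mem_nhds hx
  have huderiv : ∀ y ∈ Set.Ioo (0:ℝ) 1, HasDerivAt u (A y + (K - C y)) y := by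
    intro y hy
    have hφ : HasDerivAt (fun z => (z - 1) * A z + z * (K - C z)) (A y + (K - C y)) y := by
      have hd : HasDerivAt (fun z => (z - 1) * A z + z * (K - C z))
          (1 * A y + (y - 1) * (y * σ y) + (1 * (K - C y) + y * (0 - (y - 1) * σ y))) y := by
        exact (((hasDerivAt_id y).sub_const 1).mul (hA' y)).add
          ((hasDerivAt_id y).mul ((hasDerivAt_const y K).sub (hC' y)))
      convert hd using 1; ring
    refine hφ.congr_of_eventuallyEq ?_
    filter_upwards [isOpen_Ioo.mem_nhds hy] with z hz
    exact hu_eq z (Set.mem_Icc_of_Ioo hz)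
  have hderiv_u_eq : ∀ y ∈ Set.Ioo (0:ℝ) 1, deriv u y = A y + (K - C y) := fun y hy =>
    (huderiv y hy).deriv
  -- main computation
  have hεd : HasDerivAt ε (deriv ε x) x :=
    ((hε.differentiable one_ne_zero) x).hasDerivAt
  have hψ : HasDerivAt (fun y => A y + (K - C y)) (σ x) x := by
    have hd : HasDerivAt (fun y => A y + (K - C y)) (x * σ x + (0 - (x - 1) * σ x)) x :=
      (hA' x).add ((hasDerivAt_const x K).sub (hC' x))
    convert hd using 1; ring
  have hprod : HasDerivAt (fun y => ε y * (A y + (K - C y)))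
      (deriv ε x * (A x + (K - C x)) + ε x * σ x) x := hεd.mul hψ
  have heq : (fun y => ε y * deriv u y) =ᶠ[nhds x] (fun y => ε y * (A y + (K - C y))) := by
    filter_upwards [hmemnhds] with z hz
    rw [hderiv_u_eq z hz]
  rw [Filter.EventuallyEq.deriv_eq heq, hprod.deriv]
  -- use the integral equation
  have hxI : x ∈ Set.Icc (0:ℝ) 1 := Set.mem_Icc_of_Ioo hx
  have hεx : ε x ≠ 0 := (hεpos x hxI).ne'
  have := hinteq x hxI
  rw [hv_eq x hxI] at this
  field_simp at this
  nlinarith [this]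
end
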